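/- Let K ⊂ ℂ be a compact set such that the Riemann surface ℂ̄ \ K belongs to the class O_AD (admits no non-constant holomorphic functions with finite Dirichlet integral). Then any injective holomorphic map (univalent function) f : ℂ̄ \ K → ℂ̄ is the restriction of a Möbius transformation. -/

import Mathlib

open Set MeasureTheory Metric Complex


theorem det_restrict (c : ℂ) :
    LinearMap.det ((c • (1 : ℂ →L[ℂ] ℂ)).restrictScalars ℝ : ℂ →ₗ[ℝ] ℂ) = ‖c‖ ^ 2 := by
  have h : LinearMap.toMatrix basisOneI basisOneI
      ((c • (1 : ℂ →L[ℂ] ℂ)).restrictScalars ℝ : ℂ →ₗ[ℝ] ℂ) = !![c.re, -c.im; c.im, c.re] := by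
    ext i j
    fin_cases i <;> fin_cases j <;>
      simp [LinearMap.toMatrix_apply, coe_basisOneI, coe_basisOneI_repr]
  rw [← LinearMap.det_toMatrix basisOneI, h, Matrix.det_fin_two_of]
  have : ‖c‖ ^ 2 = Complex.normSq c := by rw [Complex.sq_norm]
  rw [this, Complex.normSq_apply]; ring

theorem area_bound {S : Set ℂ} (hS : MeasurableSet S) {u : ℂ → ℂ}
    (hu : ∀ x ∈ S, DifferentiableAt ℂ u x) (hinj : Set.InjOn u S) {M : ℝ}
    (him : u '' S ⊆ closedBall 0 M) :
    ∫⁻ z in S, ENNReal.ofReal (‖deriv u z‖ ^ 2) < ⊤ := by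
  set Φ : ℂ → (ℂ →L[ℝ] ℂ) :=
    fun x => ((deriv u x) • (1 : ℂ →L[ℂ] ℂ)).restrictScalars ℝ with hΦ
  have hder : ∀ x ∈ S, HasFDerivWithinAt u (Φ x) S x := by
    intro x hx
    have heq : ((deriv u x) • (1 : ℂ →L[ℂ] ℂ) : ℂ →L[ℂ] ℂ)
        = ContinuousLinearMap.smulRight (1 : ℂ →L[ℂ] ℂ) (deriv u x) := by
      ext1
      simp [mul_comm]
    have h1 : HasFDerivAt u ((deriv u x) • (1 : ℂ →L[ℂ] ℂ) : ℂ →L[ℂ] ℂ) x := by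
      rw [heq]; exact (hu x hx).hasDerivAt.hasFDerivAt
    exact (h1.restrictScalars ℝ).hasFDerivWithinAt
  have key := lintegral_image_eq_lintegral_abs_det_fderiv_mul volume hS hder hinj
    (fun _ => (1 : ENNReal))
  have hdet : ∀ x, ENNReal.ofReal |(Φ x).det| = ENNReal.ofReal (‖deriv u x‖ ^ 2) := by
    intro x
    have hd : (Φ x).det = ‖deriv u x‖ ^ 2 := det_restrict (deriv u x)
    rw [hd, _root_.abs_of_nonneg (by positivity : (0:ℝ) ≤ ‖deriv u x‖ ^ 2)]
  calc ∫⁻ z in S, ENNReal.ofReal (‖deriv u z‖ ^ 2)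
      = ∫⁻ x in S, ENNReal.ofReal |(Φ x).det| * (1 : ENNReal) := by
        simp only [mul_one, hdet]
    _ = ∫⁻ _x in u '' S, (1 : ENNReal) := key.symm
    _ = volume (u '' S) := setLIntegral_one _
    _ ≤ volume (closedBall (0:ℂ) M) := measure_mono him
    _ < ⊤ := measure_closedBall_lt_top

theorem quartic_integrable (p : ℂ) {ε : ℝ} (hε : 0 < ε) :
    IntegrableOn (fun z : ℂ => ((‖z - p‖ ^ 2) ^ 2)⁻¹) {z | ε ≤ ‖z - p‖} volume := by
  have h2 : ((Module.finrank ℝ ℂ : ℝ)) < 4 := by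
    rw [Complex.finrank_real_complex]; norm_num
  have hint : Integrable (fun z : ℂ => ((1 : ℝ) + ‖z - p‖) ^ (-(4:ℝ))) volume := by
    have := (integrable_one_add_norm (E := ℂ) (μ := volume) h2).comp_sub_right p
    simpa using this
  have hint2 : IntegrableOn
      (fun z : ℂ => ((1 + ε)/ε) ^ 4 * ((1 : ℝ) + ‖z - p‖) ^ (-(4:ℝ)))
      {z | ε ≤ ‖z - p‖} volume := (hint.const_mul _).integrableOn
  have hmeas : MeasurableSet {z : ℂ | ε ≤ ‖z - p‖} := by
    have : IsClosed {z : ℂ | ε ≤ ‖z - p‖} :=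
      isClosed_le continuous_const ((continuous_id.sub continuous_const).norm)
    exact this.measurableSet
  refine hint2.mono' ?_ ?_
  · refine Measurable.aestronglyMeasurable ?_
    exact (((measurable_id.sub_const p).norm.pow_const 2).pow_const 2).inv
  · rw [ae_restrict_iff' hmeas]
    refine Filter.Eventually.of_forall (fun z hz => ?_)
    have hr : (0:ℝ) < ‖z - p‖ := lt_of_lt_of_le hε hz
    set r := ‖z - p‖ with hrdef
    have hnorm : ‖((r ^ 2) ^ 2)⁻¹‖ = ((r ^ 2) ^ 2)⁻¹ := by
      rw [Real.norm_eq_abs, _root_.abs_of_nonneg (by positivity)]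
    rw [hnorm]
    have hrpow : ((1 : ℝ) + r) ^ (-(4:ℝ)) = (((1:ℝ) + r) ^ (4:ℕ))⁻¹ := by
      rw [← Real.rpow_natCast (1+r) 4, ← Real.rpow_neg (by positivity)]
      norm_num
    rw [hrpow, ← pow_mul]
    norm_num
    have hc : (1+r)^4 ≤ ((1+ε)/ε)^4 * r^4 := by
      have h1 : 1 + r ≤ ((1+ε)/ε) * r := by
        have hzr : ε ≤ r := hz
        rw [div_mul_eq_mul_div, le_div_iff₀ hε]; nlinarith
      calc (1+r)^4 ≤ (((1+ε)/ε)*r)^4 := by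
            refine pow_le_pow_left₀ (by positivity) h1 4
        _ = ((1+ε)/ε)^4 * r^4 := by ring
    rw [inv_eq_one_div, inv_eq_one_div, mul_one_div,
      div_le_div_iff₀ (by positivity) (by positivity)]
    nlinarith [hc]


theorem exists_deriv_ne_zero {U : Set ℂ} (hU : IsOpen U) {f : ℂ → ℂ}
    (hf : DifferentiableOn ℂ f U) (hinj : Set.InjOn f U) {q : ℂ} (hq : q ∈ U) :
    ∃ p ∈ U, deriv f p ≠ 0 := by
  by_contra hcon
  push_neg at hcon
  obtain ⟨r, hr, hball⟩ := Metric.isOpen_iff.1 hU q hq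
  have hconst : ∀ z ∈ ball q r, f z = f q := by
    intro z hz
    refine (convex_ball q r).is_const_of_fderivWithin_eq_zero
      (hf.mono hball) (fun x hx => ?_) hz (mem_ball_self hr)
    have hd : DifferentiableAt ℂ f x := hf.differentiableAt (hU.mem_nhds (hball hx))
    rw [fderivWithin_of_isOpen isOpen_ball hx]
    have h0 : deriv f x = 0 := hcon x (hball hx)
    ext1
    simp [← toSpanSingleton_deriv, h0]
  set z := q + r/2
  have hzball : z ∈ ball q r := by
    simp only [z, mem_ball, dist_self_add_left]
    rw [show ((r:ℂ)/2) = ((r/2 : ℝ) : ℂ) by push_cast; ring, Complex.norm_real,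
      Real.norm_eq_abs, abs_of_pos (by positivity)]
    linarith
  have hz : z ≠ q := by
    simp only [z, ne_eq, add_eq_left]
    exact_mod_cast (by positivity : (r:ℝ)/2 ≠ 0)
  exact hz (hinj (hball hzball) hq (hconst z hzball))

theorem exists_lower_bound {U : Set ℂ} (hU : IsOpen U) {f : ℂ → ℂ}
    (hf : DifferentiableOn ℂ f U) (hinj : Set.InjOn f U) {p : ℂ} (hp : p ∈ U)
    {ε : ℝ} (hε : 0 < ε) (hball : ball p ε ⊆ U) :
    ∃ δ > 0, ∀ z ∈ U, z ∉ ball p ε → δ ≤ ‖f z - f p‖ := by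
  have han : AnalyticAt ℂ f p := hf.analyticAt (hU.mem_nhds hp)
  rcases han.eventually_constant_or_nhds_le_map_nhds with hc | hmap
  · exfalso
    obtain ⟨r, hr, h⟩ := Metric.eventually_nhds_iff_ball.1 hc
    set w := p + (min r ε)/2
    have hw1 : w ∈ ball p r := by
      simp only [w, mem_ball, dist_self_add_left]
      rw [show (((min r ε : ℝ) : ℂ))/2 = (((min r ε)/2 : ℝ) : ℂ) by push_cast; ring, Complex.norm_real,
        Real.norm_eq_abs, abs_of_pos (by positivity)]
      have := min_le_left r ε
      linarith
    have hw2 : w ∈ ball p ε := by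
      simp only [w, mem_ball, dist_self_add_left]
      rw [show (((min r ε : ℝ) : ℂ))/2 = (((min r ε)/2 : ℝ) : ℂ) by push_cast; ring, Complex.norm_real,
        Real.norm_eq_abs, abs_of_pos (by positivity)]
      have := min_le_right r ε
      linarith
    have hwp : w ≠ p := by
      simp only [w, ne_eq, add_eq_left]
      exact_mod_cast (by positivity : (min r ε)/2 ≠ 0)
    exact hwp (hinj (hball hw2) hp (h w hw1))
  · have himg : f '' (ball p ε) ∈ nhds (f p) :=
      hmap (Filter.image_mem_map (ball_mem_nhds p hε))
    obtain ⟨δ, hδ, hsub⟩ := Metric.mem_nhds_iff.1 himg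
    refine ⟨δ, hδ, fun z hz hzball => ?_⟩
    by_contra hlt
    push_neg at hlt
    have : f z ∈ ball (f p) δ := by
      rw [mem_ball, dist_eq_norm]; exact hlt
    obtain ⟨w, hw, hfw⟩ := hsub this
    exact hzball (hinj (hball hw) hz hfw ▸ hw)

/-- The Riemann surface `ℂ̄ \ K` is in the class `O_AD`: every holomorphic function on
the complement of `K` with finite Dirichlet integral is constant. -/
def IsOAD (K : Set ℂ) : Prop :=
  ∀ F : ℂ → ℂ, DifferentiableOn ℂ F Kᶜ →
    IntegrableOn (fun z => ‖deriv F z‖ ^ 2) Kᶜ volume →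
    ∀ z ∈ Kᶜ, ∀ w ∈ Kᶜ, F z = F w

/-- Rigidity of `O_AD` complements (Ahlfors–Beurling): if `ℂ̄ \ K` is in class `O_AD`,
then every univalent (injective holomorphic) function on the complement of `K` is the
restriction of a Möbius transformation. -/
theorem OAD_univalent_is_moebius (K : Set ℂ) (hK : IsCompact K) (hOAD : IsOAD K)
    (f : ℂ → ℂ) (hf : DifferentiableOn ℂ f Kᶜ) (hinj : Set.InjOn f Kᶜ) :
    ∃ a b c d : ℂ, a * d - b * c ≠ 0 ∧
      ∀ z ∈ Kᶜ, f z * (c * z + d) = a * z + b := by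
  have hKo : IsOpen Kᶜ := hK.isClosed.isOpen_compl
  have hKc : Kᶜ.Nonempty := by
    rw [nonempty_compl]
    intro hKu
    exact noncompact_univ ℂ (hKu ▸ hK)
  obtain ⟨q, hq⟩ := hKc
  obtain ⟨p, hp, ha⟩ := exists_deriv_ne_zero hKo hf hinj hq
  set a := deriv f p with ha_def
  set g : ℂ → ℂ := dslope f p with hg_def
  set h : ℂ → ℂ := dslope (dslope f p) p with hh_def
  have hfz : ∀ z, f z - f p = (z - p) * g z := by
    intro z
    have := sub_smul_dslope f p z
    rw [smul_eq_mul] at this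
    linear_combination -this
  have hgz : ∀ z, g z - a = (z - p) * h z := by
    intro z
    have h1 := sub_smul_dslope (dslope f p) p z
    rw [smul_eq_mul] at h1
    have h2 : dslope f p p = a := dslope_same f p
    rw [h2] at h1
    linear_combination -h1
  have hfa : ∀ z ∈ Kᶜ, DifferentiableAt ℂ f z :=
    fun z hz => hf.differentiableAt (hKo.mem_nhds hz)
  have hfan : AnalyticAt ℂ f p := hf.analyticAt (hKo.mem_nhds hp)
  obtain ⟨ps, hps⟩ := hfan
  have hgps : HasFPowerSeriesAt g ps.fslope p := hps.has_fpower_series_dslope_fslope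
  have hhps : HasFPowerSeriesAt h ps.fslope.fslope p := hgps.has_fpower_series_dslope_fslope
  have hga : ∀ z ∈ Kᶜ, DifferentiableAt ℂ g z := by
    intro z hz
    rcases eq_or_ne z p with rfl | hne
    · exact hgps.analyticAt.differentiableAt
    · exact (differentiableAt_dslope_of_ne hne).2 (hfa z hz)
  have hha : ∀ z ∈ Kᶜ, DifferentiableAt ℂ h z := by
    intro z hz
    rcases eq_or_ne z p with rfl | hne
    · exact hhps.analyticAt.differentiableAt
    · exact (differentiableAt_dslope_of_ne hne).2 (hga z hz)
  have hg0 : ∀ z ∈ Kᶜ, g z ≠ 0 := by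
    intro z hz hzero
    rcases eq_or_ne z p with rfl | hne
    · exact ha (by rwa [hg_def, dslope_same] at hzero)
    · have hfzp : f z - f p ≠ 0 := sub_ne_zero.2 (hinj.ne hz hp hne)
      apply hfzp
      rw [hfz z, hzero, mul_zero]
  set F : ℂ → ℂ := fun z => -h z / (a * g z) with hF_def
  have hFa : ∀ z ∈ Kᶜ, DifferentiableAt ℂ F z := by
    intro z hz
    exact (hha z hz).neg.div ((differentiableAt_const a).mul (hga z hz))
      (mul_ne_zero ha (hg0 z hz))
  have hFd : DifferentiableOn ℂ F Kᶜ := fun z hz => (hFa z hz).differentiableWithinAt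
  -- geometry: small closed ball inside Kᶜ
  obtain ⟨ε0, hε0, hb0⟩ := Metric.isOpen_iff.1 hKo p hp
  set ε := ε0 / 2 with hε_def
  have hε : 0 < ε := by positivity
  have hcb : closedBall p ε ⊆ Kᶜ := (closedBall_subset_ball (by simp [hε_def]; linarith)).trans hb0
  have hob : ball p ε ⊆ Kᶜ := ball_subset_closedBall.trans hcb
  obtain ⟨δ, hδ, hlow⟩ := exists_lower_bound hKo hf hinj hp hε hob
  set S : Set ℂ := Kᶜ \ closedBall p ε with hS_def
  have hSopen : IsOpen S := hKo.sdiff isClosed_closedBall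
  have hSmeas : MeasurableSet S := hSopen.measurableSet
  have hSsub : S ⊆ Kᶜ := diff_subset
  have hlow' : ∀ z ∈ S, δ ≤ ‖f z - f p‖ :=
    fun z hz => hlow z hz.1 (fun hb => hz.2 (ball_subset_closedBall hb))
  have hfzp0 : ∀ z ∈ S, f z - f p ≠ 0 := by
    intro z hz h0
    have := hlow' z hz
    rw [h0, norm_zero] at this
    linarith
  -- analytic continuity of deriv F on Kᶜ
  have hFan : AnalyticOnNhd ℂ F Kᶜ := hFd.analyticOnNhd hKo
  have hFderivCont : ContinuousOn (fun z => ‖deriv F z‖ ^ 2) Kᶜ :=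
    ((hFan.deriv).continuousOn).norm.pow 2
  -- Part 1: integrable on Kᶜ ∩ closedBall p ε
  have part1 : IntegrableOn (fun z => ‖deriv F z‖ ^ 2) (Kᶜ ∩ closedBall p ε) volume := by
    refine IntegrableOn.mono_set ?_ inter_subset_right
    exact (hFderivCont.mono hcb).integrableOn_compact (isCompact_closedBall p ε)
  -- the comparison functions on S
  set u : ℂ → ℂ := fun z => (f z - f p)⁻¹ with hu_def
  set v : ℂ → ℂ := fun z => a⁻¹ * (z - p)⁻¹ with hv_def
  have hu_diff : ∀ z ∈ S, DifferentiableAt ℂ u z :=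
    fun z hz => ((hfa z hz.1).sub_const (f p)).inv (hfzp0 z hz)
  have hu_inj : Set.InjOn u S := by
    intro x hx y hy hxy
    have : f x - f p = f y - f p := inv_injective hxy
    exact hinj hx.1 hy.1 (by linear_combination this)
  have hu_im : u '' S ⊆ closedBall 0 δ⁻¹ := by
    rintro _ ⟨z, hz, rfl⟩
    rw [mem_closedBall, dist_zero_right, hu_def, norm_inv]
    exact inv_anti₀ hδ (hlow' z hz)
  have hu_area : ∫⁻ z in S, ENNReal.ofReal (‖deriv u z‖ ^ 2) < ⊤ :=
    area_bound hSmeas hu_diff hu_inj hu_im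
  have hu_dOn : DifferentiableOn ℂ u S := fun z hz => (hu_diff z hz).differentiableWithinAt
  have hu_an : AnalyticOnNhd ℂ u S := hu_dOn.analyticOnNhd hSopen
  have hu_cont : ContinuousOn (fun z => ‖deriv u z‖ ^ 2) S :=
    ((hu_an.deriv).continuousOn).norm.pow 2
  have hu_int : IntegrableOn (fun z => ‖deriv u z‖ ^ 2) S volume := by
    constructor
    · exact hu_cont.aestronglyMeasurable hSmeas
    · rw [hasFiniteIntegral_iff_ofReal (Filter.Eventually.of_forall (fun z => by positivity))]
      exact hu_area
  -- v facts
  have hzpS : ∀ z ∈ S, z - p ≠ 0 := by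
    intro z hz
    rw [sub_ne_zero]
    intro hzp
    exact hz.2 (hzp ▸ mem_closedBall_self hε.le)
  have hv_hasDeriv : ∀ z ∈ S, HasDerivAt v (a⁻¹ * (-1 / (z - p) ^ 2)) z := by
    intro z hz
    have h1 : HasDerivAt (fun w : ℂ => (w - p)⁻¹) (-1 / (z - p) ^ 2) z := by
      have := ((hasDerivAt_id z).sub_const p).inv (hzpS z hz)
      simpa [Pi.inv_def] using this
    simpa using h1.const_mul a⁻¹
  have hv_diff : ∀ z ∈ S, DifferentiableAt ℂ v z :=
    fun z hz => (hv_hasDeriv z hz).differentiableAt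
  have hv_deriv_norm : ∀ z ∈ S, ‖deriv v z‖ ^ 2 = ‖a‖⁻¹ ^ 2 * ((‖z - p‖ ^ 2) ^ 2)⁻¹ := by
    intro z hz
    rw [(hv_hasDeriv z hz).deriv]
    simp [norm_mul, norm_div, norm_inv, norm_pow]
    ring
  have hv_int : IntegrableOn (fun z => ‖deriv v z‖ ^ 2) S volume := by
    have hq : IntegrableOn (fun z : ℂ => ((‖z - p‖ ^ 2) ^ 2)⁻¹) {z | ε ≤ ‖z - p‖} volume :=
      quartic_integrable p hε
    have hqS : IntegrableOn (fun z : ℂ => ((‖z - p‖ ^ 2) ^ 2)⁻¹) S volume := by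
      refine hq.mono_set ?_
      intro z hz
      have : ε < dist z p := by
        by_contra hle
        push_neg at hle
        exact hz.2 (mem_closedBall.2 hle)
      rw [mem_setOf_eq, ← dist_eq_norm]
      linarith
    have hcm := (hqS.const_mul (‖a‖⁻¹ ^ 2))
    exact IntegrableOn.congr_fun hcm (fun z hz => (hv_deriv_norm z hz).symm) hSmeas
  -- F = u - v on S
  have hEqOn : Set.EqOn F (fun z => u z - v z) S := by
    intro z hz
    have hzp := hzpS z hz
    have hgz0 : g z ≠ 0 := hg0 z hz.1
    have e1 : f z - f p = (z - p) * g z := hfz z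
    have e2 : g z - a = (z - p) * h z := hgz z
    simp only [hF_def, hu_def, hv_def]
    rw [e1]
    field_simp
    linear_combination e2
  have hderiv_split : ∀ z ∈ S, deriv F z = deriv u z - deriv v z := by
    intro z hz
    have heq : F =ᶠ[nhds z] (fun w => u w - v w) :=
      Filter.eventuallyEq_of_mem (hSopen.mem_nhds hz) hEqOn
    rw [heq.deriv_eq]
    exact deriv_sub (hu_diff z hz) (hv_diff z hz)
  -- Part 2
  have part2 : IntegrableOn (fun z => ‖deriv F z‖ ^ 2) S volume := by
    have hbound : IntegrableOn
        (fun z => 2 * ‖deriv u z‖ ^ 2 + 2 * ‖deriv v z‖ ^ 2) S volume :=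
      (hu_int.const_mul 2).add (hv_int.const_mul 2)
    refine hbound.mono' ((hFderivCont.mono hSsub).aestronglyMeasurable hSmeas) ?_
    rw [ae_restrict_iff' hSmeas]
    refine Filter.Eventually.of_forall (fun z hz => ?_)
    rw [Real.norm_eq_abs, _root_.abs_of_nonneg (by positivity), hderiv_split z hz]
    have h1 : ‖deriv u z - deriv v z‖ ≤ ‖deriv u z‖ + ‖deriv v z‖ := norm_sub_le _ _
    have h2 : ‖deriv u z - deriv v z‖ ^ 2 ≤ (‖deriv u z‖ + ‖deriv v z‖) ^ 2 :=
      pow_le_pow_left₀ (norm_nonneg _) h1 2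
    nlinarith [sq_nonneg (‖deriv u z‖ - ‖deriv v z‖)]
  have hFint : IntegrableOn (fun z => ‖deriv F z‖ ^ 2) Kᶜ volume := by
    rw [← Set.inter_union_diff Kᶜ (closedBall p ε)]
    exact part1.union part2
  -- apply O_AD
  set C := F p with hC_def
  have hC : ∀ z ∈ Kᶜ, F z = C := fun z hz => hOAD F hFd hFint z hz p hp
  refine ⟨a + f p * (C * a), f p * (1 - C * a * p) - a * p, C * a, 1 - C * a * p, ?_, ?_⟩
  · have hdet : (a + f p * (C * a)) * (1 - C * a * p)
        - (f p * (1 - C * a * p) - a * p) * (C * a) = a := by ring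
    rw [hdet]; exact ha
  · intro z hz
    have e1 : f z - f p = (z - p) * g z := hfz z
    have e2 : g z - a = (z - p) * h z := hgz z
    have e3 : h z = -(C * (a * g z)) := by
      have hCz := hC z hz
      rw [hF_def] at hCz
      have := (div_eq_iff (mul_ne_zero ha (hg0 z hz))).1 hCz
      linear_combination -this
    linear_combination (C * a * z + 1 - C * a * p) * e1 + (z - p) * e2 + (z - p) ^ 2 * e3
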